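/- In an eliminate(veto) election (iteratively eliminate the candidate with the fewest veto points, i.e., most last-place weight), suppose a set W of top-truncated manipulator ballots together with non-manipulator ballots S produces the elimination order e = (c₁, c₂, ..., c_m = p). Then replacing every ballot in W by the complete linear order c_m ≻ c_{m−1} ≻ ... ≻ c₁ produces the same elimination order e. Hence any constructive manipulation achievable with top-truncated ballots in eliminate(veto) (unique winner model) is achievable with complete ballots. -/

import Mathlib

variable {C : Type*}

/-- Whether the top-truncated ballot `l` (its ranked prefix) prefers `c` to `c'`. -/
def prefB [DecidableEq C] (l : List C) (c c' : C) : Bool :=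
  decide (c ∈ l) && (!(decide (c' ∈ l)) || decide (l.idxOf c < l.idxOf c'))

/-- `c` is vetoed (placed in the bottom tie) by the top-truncated ballot `l`
restricted to the surviving candidates `A`: `l` prefers no other surviving
candidate below `c`.  (A ballot all of whose listed candidates are eliminated
vetoes every surviving candidate, which has the same effect as ignoring it.) -/
def vetoedB [DecidableEq C] (l : List C) (A : Finset C) (c : C) : Bool :=
  decide (∀ c' ∈ A, c' ≠ c → ¬ (prefB l c c' = true))

/-- Veto score of `c` among surviving candidates `A`: total weight of ballots
that do not veto `c`.  The candidate with the lowest veto score is eliminated. -/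
def vetoScore [DecidableEq C] (P : List (ℕ × List C)) (A : Finset C) (c : C) : ℕ :=
  (P.map fun wb => if vetoedB wb.2 A c then 0 else wb.1).sum

/-- `e` is an elimination order of eliminate(veto) on the weighted profile `P`:
it enumerates all candidates without repetition, and at each stage the eliminated
candidate has minimal veto score among the surviving candidates. -/
def IsElimOrder [Fintype C] [DecidableEq C] (P : List (ℕ × List C)) (e : List C) : Prop :=
  e.Nodup ∧ (∀ c : C, c ∈ e) ∧
    ∀ (i : ℕ) (hi : i < e.length), ∀ c ∈ Finset.univ \ (e.take i).toFinset,
      vetoScore P (Finset.univ \ (e.take i).toFinset) (e.get ⟨i, hi⟩) ≤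
        vetoScore P (Finset.univ \ (e.take i).toFinset) c

/-- Index of an element in the reverse of a nodup list. -/
lemma indexOf_reverse_of_nodup [DecidableEq C] {e : List C} (hnd : e.Nodup)
    {x : C} (hx : x ∈ e) : e.reverse.idxOf x = e.length - 1 - e.idxOf x := by
  have h1 : e.idxOf x < e.length := List.idxOf_lt_length_iff.2 hx
  have h2 : e.length - 1 - e.idxOf x < e.reverse.length := by
    rw [List.length_reverse]; omega
  have h3 : e.reverse.get ⟨e.length - 1 - e.idxOf x, h2⟩ = x := by
    simp only [List.get_eq_getElem, List.getElem_reverse]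
    have hk : e.length - 1 - (e.length - 1 - e.idxOf x) = e.idxOf x := by omega
    simp only [hk]
    exact List.getElem_idxOf h1
  calc e.reverse.idxOf x
      = e.reverse.idxOf (e.reverse.get ⟨e.length - 1 - e.idxOf x, h2⟩) := by rw [h3]
    _ = e.length - 1 - e.idxOf x := List.get_idxOf (List.nodup_reverse.2 hnd) _

/-- In eliminate(veto), if the top-truncated manipulator ballots `W` together with the
non-manipulators `S` produce the elimination order `e = (c₁, …, c_m = p)`, then replacing
every ballot in `W` by the complete ballot `c_m ≻ c_{m-1} ≻ ⋯ ≻ c₁` (i.e. `e.reverse`)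
produces the same elimination order; hence any constructive manipulation achievable with
top-truncated ballots is achievable with complete ballots. -/
theorem eliminateVeto_toptruncated [Fintype C] [DecidableEq C]
    (S W : List (ℕ × List C)) (e : List C) (p : C)
    (hW : ∀ wb ∈ W, wb.2.Nodup)
    (hp : e.getLast? = some p)
    (h : IsElimOrder (S ++ W) e) :
    IsElimOrder (S ++ W.map (fun wb => (wb.1, e.reverse))) e := by
  obtain ⟨hnd, hall, hmin⟩ := h
  refine ⟨hnd, hall, ?_⟩
  intro i hi c hc
  set A := Finset.univ \ (e.take i).toFinset with hA
  set ci := e.get ⟨i, hi⟩ with hci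
  have hidx_ci : e.idxOf ci = i := List.get_idxOf hnd ⟨i, hi⟩
  have hnotin : ∀ x ∈ A, x ∉ e.take i := by
    intro x hx
    rw [hA, Finset.mem_sdiff, List.mem_toFinset] at hx
    exact hx.2
  -- ci is a surviving candidate
  have hciA : ci ∈ A := by
    rw [hA, Finset.mem_sdiff, List.mem_toFinset]
    refine ⟨Finset.mem_univ _, ?_⟩
    intro hmem
    have hdisj : List.Disjoint (e.take i) (e.drop i) := by
      have := hnd
      rw [← List.take_append_drop i e] at this
      exact List.disjoint_of_nodup_append this
    have hdroplen : 0 < (e.drop i).length := by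
      rw [List.length_drop]; omega
    have hcid : ci ∈ e.drop i := by
      have : (e.drop i)[0] = ci := by
        rw [List.getElem_drop]
        simp [hci]
      rw [← this]
      exact List.getElem_mem _
    exact hdisj hmem hcid
  -- surviving candidates other than ci have index greater than i
  have hgt : ∀ x ∈ A, x ≠ ci → i < e.idxOf x := by
    intro x hx hne
    have hxe : x ∈ e := hall x
    have hxi : e.idxOf x < e.length := List.idxOf_lt_length_iff.2 hxe
    rcases lt_trichotomy (e.idxOf x) i with hlt | heq | hgt'
    · exfalso
      apply hnotin x hx
      have hx' : (e.take i)[e.idxOf x]'(by rw [List.length_take]; omega) = x := by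
        rw [List.getElem_take]
        exact List.getElem_idxOf hxi
      rw [← hx']
      exact List.getElem_mem _
    · exfalso
      apply hne
      have := List.idxOf_get (a := x) (l := e) hxi
      rw [← this]
      simp [hci, heq]
    · exact hgt'
  -- the replaced ballot vetoes ci
  have hAci : vetoedB e.reverse A ci = true := by
    simp only [vetoedB, decide_eq_true_eq]
    intro c' hc' hne hpref
    have hc'e : c' ∈ e := hall c'
    simp only [prefB, Bool.and_eq_true, Bool.or_eq_true, Bool.not_eq_true',
      decide_eq_true_eq, decide_eq_false_iff_not, List.mem_reverse] at hpref
    obtain ⟨-, h2⟩ := hpref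
    rcases h2 with h2 | h2
    · exact h2 hc'e
    · rw [indexOf_reverse_of_nodup hnd (hall ci),
        indexOf_reverse_of_nodup hnd hc'e, hidx_ci] at h2
      have hg := hgt c' hc' hne
      have : e.idxOf c' < e.length := List.idxOf_lt_length_iff.2 hc'e
      omega
  -- the replaced ballot does not veto any other surviving candidate
  have hBx : ∀ x ∈ A, x ≠ ci → vetoedB e.reverse A x = false := by
    intro x hx hne
    simp only [vetoedB, decide_eq_false_iff_not]
    intro hP
    apply hP ci hciA (Ne.symm hne)
    simp only [prefB, Bool.and_eq_true, Bool.or_eq_true, decide_eq_true_eq, List.mem_reverse]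
    refine ⟨hall x, Or.inr ?_⟩
    rw [indexOf_reverse_of_nodup hnd (hall x), indexOf_reverse_of_nodup hnd (hall ci), hidx_ci]
    have hg := hgt x hx hne
    have : e.idxOf x < e.length := List.idxOf_lt_length_iff.2 (hall x)
    omega
  have split : ∀ (L : List (ℕ × List C)) (x : C),
      vetoScore (S ++ L) A x = vetoScore S A x + vetoScore L A x := by
    intro L x
    simp [vetoScore, List.sum_append]
  by_cases hcc : c = ci
  · rw [hcc]
  · have key1 : vetoScore (S ++ W.map fun wb => (wb.1, e.reverse)) A ci ≤
        vetoScore (S ++ W) A ci := by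
      rw [split, split]
      apply Nat.add_le_add_left
      have : vetoScore (W.map fun wb => (wb.1, e.reverse)) A ci = 0 := by
        simp [vetoScore, List.map_map, Function.comp_def, hAci]
      rw [this]
      exact Nat.zero_le _
    have key2 := hmin i hi c hc
    have key3 : vetoScore (S ++ W) A c ≤
        vetoScore (S ++ W.map fun wb => (wb.1, e.reverse)) A c := by
      rw [split, split]
      apply Nat.add_le_add_left
      have hrhs : vetoScore (W.map fun wb => (wb.1, e.reverse)) A c =
          (W.map fun wb => wb.1).sum := by
        simp [vetoScore, List.map_map, Function.comp_def, hBx c hc hcc]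
      rw [hrhs, vetoScore]
      apply List.sum_le_sum
      intro wb _
      split <;> omega
    calc vetoScore (S ++ W.map fun wb => (wb.1, e.reverse)) A ci
        ≤ vetoScore (S ++ W) A ci := key1
      _ ≤ vetoScore (S ++ W) A c := key2
      _ ≤ _ := key3
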